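/- Let T : Fin L → α and T' : Fin L → β be sequences over linear orders with E(T) = E(T'), and let x : α, x' : β be characters such that (1) the number of distinct values of T strictly smaller than x equals the number of distinct values of T' strictly smaller than x', and (2) x occurs among the values of T if and only if x' occurs among the values of T'. Then E(x·T) = E(x'·T'), where x·T denotes the sequence of length L+1 whose first entry is x followed by the entries of T. In other words, the rank encoding of a string extended by one character to the left is determined by the rank encoding of the string together with the rank information of the new character among the string's values. -/

import Mathlib

open Finset
open Finset

lemma rank_lt_rank {α} [LinearOrder α] (B : Finset α) {u : α} (a : α) (hu : u ∈ B) :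
    u < a ↔ (B.filter (fun b => b < u)).card < (B.filter (fun b => b < a)).card := by
  constructor
  · intro h
    apply Finset.card_lt_card
    constructor
    · intro b hb
      simp only [mem_filter] at hb ⊢
      exact ⟨hb.1, hb.2.trans h⟩
    · intro hsub
      have := hsub (by simp [mem_filter, hu, h] : u ∈ B.filter (fun b => b < a))
      simp at this
  · intro h
    by_contra hle
    push_neg at hle
    have : (B.filter (fun b => b < a)).card ≤ (B.filter (fun b => b < u)).card := by
      apply Finset.card_le_card
      intro b hb
      simp only [mem_filter] at hb ⊢
      exact ⟨hb.1, lt_of_lt_of_le hb.2 hle⟩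
    omega

lemma eq_of_rank_eq {α} [LinearOrder α] (B : Finset α) {u a : α} (hu : u ∈ B) (ha : a ∈ B)
    (h : (B.filter (fun b => b < u)).card = (B.filter (fun b => b < a)).card) : u = a := by
  rcases lt_trichotomy u a with hc | hc | hc
  · rw [rank_lt_rank B a hu] at hc; omega
  · exact hc
  · rw [rank_lt_rank B u ha] at hc; omega
open Finset

lemma card_image_eq {ι α β : Type*} [DecidableEq α] [DecidableEq β] {T : ι → α} {T' : ι → β}
    [DecidableEq ι] :
    ∀ (A : Finset ι), (∀ j ∈ A, ∀ k ∈ A, T j = T k ↔ T' j = T' k) →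
      (A.image T).card = (A.image T').card := by
  intro A
  induction A using Finset.induction with
  | empty => simp
  | @insert a s ha ih =>
    intro h
    rw [Finset.image_insert, Finset.image_insert]
    have hmem : T a ∈ s.image T ↔ T' a ∈ s.image T' := by
      simp only [Finset.mem_image]
      constructor
      · rintro ⟨j, hj, hje⟩
        exact ⟨j, hj, (h j (by simp [hj]) a (by simp)).mp hje⟩
      · rintro ⟨j, hj, hje⟩
        exact ⟨j, hj, (h j (by simp [hj]) a (by simp)).mpr hje⟩
    have ih' := ih (fun j hj k hk => h j (by simp [hj]) k (by simp [hk]))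
    by_cases hc : T a ∈ s.image T
    · rw [Finset.insert_eq_self.mpr hc, Finset.insert_eq_self.mpr (hmem.mp hc), ih']
    · rw [Finset.card_insert_of_notMem hc,
        Finset.card_insert_of_notMem (fun hc' => hc (hmem.mpr hc')), ih']

lemma card_filter_image_eq {ι α β : Type*} [DecidableEq α] [DecidableEq β] [DecidableEq ι]
    {T : ι → α} {T' : ι → β} (A : Finset ι) (p : α → Prop) (q : β → Prop)
    [DecidablePred p] [DecidablePred q]
    (heq : ∀ j ∈ A, ∀ k ∈ A, T j = T k ↔ T' j = T' k)
    (hpq : ∀ j ∈ A, (p (T j) ↔ q (T' j))) :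
    ((A.image T).filter p).card = ((A.image T').filter q).card := by
  have h1 : (A.image T).filter p = (A.filter (fun j => p (T j))).image T := by
    ext a
    simp only [mem_filter, mem_image]
    constructor
    · rintro ⟨⟨j, hj, rfl⟩, hp⟩; exact ⟨j, ⟨hj, hp⟩, rfl⟩
    · rintro ⟨j, ⟨hj, hp⟩, rfl⟩; exact ⟨⟨j, hj, rfl⟩, hp⟩
  have h2 : (A.image T').filter q = (A.filter (fun j => q (T' j))).image T' := by
    ext a
    simp only [mem_filter, mem_image]
    constructor
    · rintro ⟨⟨j, hj, rfl⟩, hp⟩; exact ⟨j, ⟨hj, hp⟩, rfl⟩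
    · rintro ⟨j, ⟨hj, hp⟩, rfl⟩; exact ⟨⟨j, hj, rfl⟩, hp⟩
  have h3 : A.filter (fun j => p (T j)) = A.filter (fun j => q (T' j)) := by
    apply Finset.filter_congr
    intro j hj
    exact iff_iff_eq.mp (hpq j hj) ▸ Iff.rfl
  rw [h1, h2, ← h3]
  exact card_image_eq _ (fun j hj k hk =>
    heq j (Finset.mem_filter.mp hj).1 k (Finset.mem_filter.mp hk).1)
open Finset

lemma encode_eq_iff {d d' : ℕ} {o o' : Prop} [Decidable o] [Decidable o']
    (h : (d : ℚ) + (if o then 1 else 1/2) = (d' : ℚ) + (if o' then 1 else 1/2)) :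
    d = d' ∧ (o ↔ o') := by
  split_ifs at h with h1 h2 h2
  · have : (d:ℚ) = d' := by linarith
    exact ⟨by exact_mod_cast this, by tauto⟩
  · exfalso
    have : (2 * d + 2 : ℚ) = 2 * d' + 1 := by linarith
    have : 2 * d + 2 = 2 * d' + 1 := by exact_mod_cast this
    omega
  · exfalso
    have : (2 * d + 1 : ℚ) = 2 * d' + 2 := by linarith
    have : 2 * d + 1 = 2 * d' + 2 := by exact_mod_cast this
    omega
  · have : (d:ℚ) = d' := by linarith
    exact ⟨by exact_mod_cast this, by tauto⟩




/- The rank encoding `E(s)` of a sequence `s : Fin m → α` over a linear order: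
`E(s)(i) = d_i + 1` if `s i` equals some earlier character, and `d_i + 1/2` otherwise,
where `d_i` is the number of distinct values among `s 0, …, s (i-1)` strictly smaller
than `s i`. -/
open Classical in
noncomputable def rankEncode {m : ℕ} {α : Type*} [LinearOrder α] (s : Fin m → α) :
    Fin m → ℚ := fun i =>
  ((((Finset.univ : Finset (Fin m)).filter (fun j : Fin m => (j : ℕ) < (i : ℕ))).image s).filter
      (fun a => a < s i)).card +
    (if ∃ j : Fin m, (j : ℕ) < (i : ℕ) ∧ s j = s i then 1 else 1/2)

open Classical in
lemma rankEncode_d_occ {L : ℕ} {α β : Type*} [LinearOrder α] [LinearOrder β]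
    {T : Fin L → α} {T' : Fin L → β} (hE : rankEncode T = rankEncode T') (i : Fin L) :
    ((((Finset.univ : Finset (Fin L)).filter (fun j : Fin L => (j : ℕ) < (i : ℕ))).image T).filter
      (fun a => a < T i)).card =
    ((((Finset.univ : Finset (Fin L)).filter (fun j : Fin L => (j : ℕ) < (i : ℕ))).image T').filter
      (fun a => a < T' i)).card ∧
    ((∃ j : Fin L, (j : ℕ) < (i : ℕ) ∧ T j = T i) ↔ (∃ j : Fin L, (j : ℕ) < (i : ℕ) ∧ T' j = T' i)) := by
  have h := congrFun hE i
  simp only [rankEncode] at h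
  exact encode_eq_iff h

open Classical in
lemma pattern {L : ℕ} {α β : Type*} [LinearOrder α] [LinearOrder β] {T : Fin L → α}
    {T' : Fin L → β} (hE : rankEncode T = rankEncode T') :
    ∀ i j : Fin L, (T j < T i ↔ T' j < T' i) ∧ (T j = T i ↔ T' j = T' i) := by
  have key : ∀ i j : Fin L, (j : ℕ) < (i : ℕ) →
      (∀ a b : Fin L, (a : ℕ) < (i : ℕ) → (b : ℕ) < (i : ℕ) →
        ((T b < T a ↔ T' b < T' a) ∧ (T b = T a ↔ T' b = T' a))) →
      ((T j < T i ↔ T' j < T' i) ∧ (T j = T i ↔ T' j = T' i)) := by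
    intro i j hji IH
    set A := (Finset.univ : Finset (Fin L)).filter (fun k : Fin L => (k : ℕ) < (i : ℕ)) with hA
    obtain ⟨hd, hocc⟩ := rankEncode_d_occ hE i
    have hmemA : ∀ k : Fin L, k ∈ A → (k : ℕ) < (i : ℕ) := fun k hk => (mem_filter.mp hk).2
    have hAmem : ∀ k : Fin L, (k : ℕ) < (i : ℕ) → k ∈ A := fun k hk => mem_filter.mpr ⟨mem_univ _, hk⟩
    have hjA : j ∈ A := hAmem j hji
    have hTj : T j ∈ A.image T := mem_image_of_mem _ hjA
    have hTj' : T' j ∈ A.image T' := mem_image_of_mem _ hjA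
    have hrk : ((A.image T).filter (fun b => b < T j)).card
        = ((A.image T').filter (fun b => b < T' j)).card := by
      apply card_filter_image_eq
      · intro a ha b hb
        exact (IH b a (hmemA b hb) (hmemA a ha)).2
      · intro a ha
        exact (IH j a hji (hmemA a ha)).1
    constructor
    · rw [rank_lt_rank (A.image T) (T i) hTj, rank_lt_rank (A.image T') (T' i) hTj', hrk]
      rw [show ((A.image T).filter (fun b => b < T i)).card
          = ((A.image T').filter (fun b => b < T' i)).card from hd]
    · have char : T j = T i ↔ ((∃ k : Fin L, (k : ℕ) < (i : ℕ) ∧ T k = T i) ∧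
          ((A.image T).filter (fun b => b < T j)).card
            = ((A.image T).filter (fun b => b < T i)).card) := by
        constructor
        · intro h; exact ⟨⟨j, hji, h⟩, by rw [h]⟩
        · rintro ⟨⟨k, hk, hke⟩, hcard⟩
          have hTk : T k ∈ A.image T := mem_image_of_mem _ (hAmem k hk)
          have := eq_of_rank_eq (A.image T) hTj hTk (by rw [hcard, hke])
          rw [this, hke]
      have char' : T' j = T' i ↔ ((∃ k : Fin L, (k : ℕ) < (i : ℕ) ∧ T' k = T' i) ∧
          ((A.image T').filter (fun b => b < T' j)).card
            = ((A.image T').filter (fun b => b < T' i)).card) := by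
        constructor
        · intro h; exact ⟨⟨j, hji, h⟩, by rw [h]⟩
        · rintro ⟨⟨k, hk, hke⟩, hcard⟩
          have hTk : T' k ∈ A.image T' := mem_image_of_mem _ (hAmem k hk)
          have := eq_of_rank_eq (A.image T') hTj' hTk (by rw [hcard, hke])
          rw [this, hke]
      rw [char, char']
      apply and_congr hocc
      rw [hrk]
      rw [show ((A.image T).filter (fun b => b < T i)).card
          = ((A.image T').filter (fun b => b < T' i)).card from hd]
  have main : ∀ n : ℕ, ∀ i j : Fin L, (i : ℕ) < n → (j : ℕ) < n →
      ((T j < T i ↔ T' j < T' i) ∧ (T j = T i ↔ T' j = T' i)) := by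
    intro n
    induction n with
    | zero => intro i j hi; omega
    | succ n ih =>
      intro i j hi hj
      rcases lt_trichotomy ((j : ℕ)) ((i : ℕ)) with hc | hc | hc
      · exact key i j hc (fun a b ha hb => ih a b (by omega) (by omega))
      · have : j = i := Fin.ext hc
        subst this
        exact ⟨iff_of_false (lt_irrefl _) (lt_irrefl _), iff_of_true rfl rfl⟩
      · obtain ⟨h1, h2⟩ := key j i hc (fun a b ha hb => ih a b (by omega) (by omega))
        constructor
        · rw [lt_iff_not_ge, lt_iff_not_ge, le_iff_lt_or_eq,
            le_iff_lt_or_eq, h1, h2]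
        · constructor
          · intro h; exact (h2.mp h.symm).symm
          · intro h; exact (h2.mpr h.symm).symm
  intro i j
  exact main (max (i : ℕ) (j : ℕ) + 1) i j (by omega) (by omega)


lemma lt_char_notmem {α : Type*} [LinearOrder α] (B : Finset α) {x a : α} (ha : a ∈ B)
    (hne : x ≠ a) :
    x < a ↔ (B.filter (fun b => b < x)).card ≤ (B.filter (fun b => b < a)).card := by
  constructor
  · intro h
    by_contra hle
    push_neg at hle
    rw [← rank_lt_rank B x ha] at hle
    exact absurd h (not_lt.mpr hle.le)
  · intro h
    have h2 : ¬ a < x := by rw [rank_lt_rank B x ha]; omega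
    exact lt_of_le_of_ne (not_lt.mp h2) hne

lemma cons_prefix_image {L : ℕ} {α : Type*} [DecidableEq α] (x : α) (T : Fin L → α) (k : Fin L) :
    (((Finset.univ : Finset (Fin (L+1))).filter
        (fun j : Fin (L+1) => (j : ℕ) < (k : ℕ) + 1)).image (Fin.cons x T))
      = insert x (((Finset.univ : Finset (Fin L)).filter
        (fun j : Fin L => (j : ℕ) < (k : ℕ))).image T) := by
  ext a
  simp only [mem_image, mem_filter, mem_univ, true_and, mem_insert]
  constructor
  · rintro ⟨j, hj, rfl⟩
    induction j using Fin.cases with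
    | zero => left; simp
    | succ m =>
      right
      exact ⟨m, by simpa using hj, by simp⟩
  · rintro (rfl | ⟨m, hm, rfl⟩)
    · exact ⟨0, by simp, by simp⟩
    · exact ⟨m.succ, by simp [hm], by simp⟩

lemma cons_occ {L : ℕ} {α : Type*} (x : α) (T : Fin L → α) (k : Fin L) :
    (∃ j : Fin (L+1), (j : ℕ) < (k : ℕ) + 1 ∧ (Fin.cons x T : Fin (L+1) → α) j = T k)
      ↔ (x = T k ∨ ∃ j : Fin L, (j : ℕ) < (k : ℕ) ∧ T j = T k) := by
  constructor
  · rintro ⟨j, hj, he⟩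
    induction j using Fin.cases with
    | zero => left; simpa using he
    | succ m =>
      right
      exact ⟨m, by simpa using hj, by simpa using he⟩
  · rintro (h | ⟨m, hm, he⟩)
    · exact ⟨0, by simp, by simp [h.symm]⟩
    · exact ⟨m.succ, by simp [hm], by simp [he]⟩

lemma card_filter_insert {γ : Type*} [LinearOrder γ] (y tk : γ) (P : Finset γ) :
    ((insert y P).filter (fun a => a < tk)).card
      = (P.filter (fun a => a < tk)).card + (if y < tk ∧ y ∉ P then 1 else 0) := by
  rw [Finset.filter_insert]
  by_cases h1 : y < tk
  · rw [if_pos h1]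
    by_cases h2 : y ∈ P
    · have hm : y ∈ P.filter (fun a => a < tk) := mem_filter.mpr ⟨h2, h1⟩
      rw [Finset.insert_eq_self.mpr hm, if_neg (fun hc => hc.2 h2), Nat.add_zero]
    · rw [Finset.card_insert_of_notMem (fun hc => h2 (mem_filter.mp hc).1),
        if_pos ⟨h1, h2⟩]
  · rw [if_neg h1, if_neg (fun hc => h1 hc.1), Nat.add_zero]



open Classical in
/-- If `T` and `T'` have equal rank encodings, and the new characters `x` and `x'` have
the same rank information among the values of `T` and `T'` respectively (same number of
distinct smaller values, and occurring iff the other occurs), then prepending them yields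
equal rank encodings. -/
theorem rankEncode_cons {L : ℕ} {α β : Type*} [LinearOrder α] [LinearOrder β]
    (T : Fin L → α) (T' : Fin L → β) (x : α) (x' : β)
    (hE : rankEncode T = rankEncode T')
    (hrank : (((Finset.univ : Finset (Fin L)).image T).filter (fun a => a < x)).card =
      (((Finset.univ : Finset (Fin L)).image T').filter (fun b => b < x')).card)
    (hocc : (∃ i : Fin L, T i = x) ↔ (∃ i : Fin L, T' i = x')) :
    rankEncode (Fin.cons x T : Fin (L + 1) → α) =
      rankEncode (Fin.cons x' T' : Fin (L + 1) → β) := by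
  have hpat := pattern hE
  set V := (Finset.univ : Finset (Fin L)).image T with hV
  set V' := (Finset.univ : Finset (Fin L)).image T' with hV'
  have P1 : ∀ k : Fin L, (V.filter (fun b => b < T k)).card
      = (V'.filter (fun b => b < T' k)).card := fun k =>
    card_filter_image_eq Finset.univ _ _ (fun a _ b _ => (hpat b a).2) (fun a _ => (hpat k a).1)
  have hrank' : (V.filter (fun b => b < x)).card = (V'.filter (fun b => b < x')).card := hrank
  have P2 : ∀ k : Fin L, (x = T k ↔ x' = T' k) := by
    by_cases hxV : ∃ i : Fin L, T i = x
    · obtain ⟨i0, hi0⟩ := hxV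
      obtain ⟨i1, hi1⟩ := hocc.mp ⟨i0, hi0⟩
      have hxm : x ∈ V := mem_image.mpr ⟨i0, mem_univ _, hi0⟩
      have hx'm : x' ∈ V' := mem_image.mpr ⟨i1, mem_univ _, hi1⟩
      intro k
      have hTkm : T k ∈ V := mem_image.mpr ⟨k, mem_univ _, rfl⟩
      have hTk'm : T' k ∈ V' := mem_image.mpr ⟨k, mem_univ _, rfl⟩
      constructor
      · intro h
        apply eq_of_rank_eq V' hx'm hTk'm
        rw [← hrank', ← P1 k, h]
      · intro h
        apply eq_of_rank_eq V hxm hTkm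
        rw [hrank', P1 k, h]
    · intro k
      constructor
      · intro h; exact absurd ⟨k, h.symm⟩ hxV
      · intro h; exact absurd (hocc.mpr ⟨k, h.symm⟩) hxV
  have P3 : ∀ k : Fin L, (x < T k ↔ x' < T' k) := by
    by_cases hxV : ∃ i : Fin L, T i = x
    · obtain ⟨i0, hi0⟩ := hxV
      obtain ⟨i1, hi1⟩ := hocc.mp ⟨i0, hi0⟩
      have hxm : x ∈ V := mem_image.mpr ⟨i0, mem_univ _, hi0⟩
      have hx'm : x' ∈ V' := mem_image.mpr ⟨i1, mem_univ _, hi1⟩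
      intro k
      rw [rank_lt_rank V (T k) hxm, rank_lt_rank V' (T' k) hx'm, hrank', P1 k]
    · intro k
      have hne : x ≠ T k := fun h => hxV ⟨k, h.symm⟩
      have hne' : x' ≠ T' k := fun h => hxV (hocc.mpr ⟨k, h.symm⟩)
      have hTkm : T k ∈ V := mem_image.mpr ⟨k, mem_univ _, rfl⟩
      have hTk'm : T' k ∈ V' := mem_image.mpr ⟨k, mem_univ _, rfl⟩
      rw [lt_char_notmem V hTkm hne, lt_char_notmem V' hTk'm hne', hrank', P1 k]
  funext i
  induction i using Fin.cases with
  | zero => simp [rankEncode]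
  | succ k =>
    set Pk := ((Finset.univ : Finset (Fin L)).filter
        (fun j : Fin L => (j : ℕ) < (k : ℕ))).image T with hPk
    set Pk' := ((Finset.univ : Finset (Fin L)).filter
        (fun j : Fin L => (j : ℕ) < (k : ℕ))).image T' with hPk'
    obtain ⟨hd, hoccE⟩ := rankEncode_d_occ hE k
    have hmemP : x ∈ Pk ↔ x' ∈ Pk' := by
      simp only [hPk, hPk', mem_image, mem_filter, mem_univ, true_and]
      constructor
      · rintro ⟨j, hj, hje⟩; exact ⟨j, hj, ((P2 j).mp hje.symm).symm⟩
      · rintro ⟨j, hj, hje⟩; exact ⟨j, hj, ((P2 j).mpr hje.symm).symm⟩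
    have goalL : rankEncode (Fin.cons x T : Fin (L+1) → α) k.succ
        = (((Pk.filter (fun a => a < T k)).card + (if x < T k ∧ x ∉ Pk then 1 else 0) : ℕ) : ℚ)
          + (if (x = T k ∨ ∃ j : Fin L, (j : ℕ) < (k : ℕ) ∧ T j = T k) then 1 else 1/2) := by
      simp only [rankEncode, Fin.cons_succ, Fin.val_succ]
      congr 1
      · rw [cons_prefix_image x T k]
        exact_mod_cast card_filter_insert x (T k) Pk
      · exact if_congr (cons_occ x T k) rfl rfl
    have goalR : rankEncode (Fin.cons x' T' : Fin (L+1) → β) k.succ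
        = (((Pk'.filter (fun a => a < T' k)).card + (if x' < T' k ∧ x' ∉ Pk' then 1 else 0) : ℕ) : ℚ)
          + (if (x' = T' k ∨ ∃ j : Fin L, (j : ℕ) < (k : ℕ) ∧ T' j = T' k) then 1 else 1/2) := by
      simp only [rankEncode, Fin.cons_succ, Fin.val_succ]
      congr 1
      · rw [cons_prefix_image x' T' k]
        exact_mod_cast card_filter_insert x' (T' k) Pk'
      · exact if_congr (cons_occ x' T' k) rfl rfl
    rw [goalL, goalR]
    have e1 : (Pk.filter (fun a => a < T k)).card = (Pk'.filter (fun a => a < T' k)).card := hd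
    have e2 : (if x < T k ∧ x ∉ Pk then 1 else 0) = (if x' < T' k ∧ x' ∉ Pk' then 1 else 0) :=
      if_congr (and_congr (P3 k) (not_congr hmemP)) rfl rfl
    have e3 : (if (x = T k ∨ ∃ j : Fin L, (j : ℕ) < (k : ℕ) ∧ T j = T k) then (1:ℚ) else 1/2)
        = (if (x' = T' k ∨ ∃ j : Fin L, (j : ℕ) < (k : ℕ) ∧ T' j = T' k) then 1 else 1/2) :=
      if_congr (or_congr (P2 k) hoccE) rfl rfl
    rw [e1, e2, e3]
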